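/- Let E be a finite-dimensional real inner product space and let C : ℝ → E be real-analytic on a neighborhood of 0, with C(0) = 0 and C not identically zero on any neighborhood of 0. Then the ratio ⟪C(s), C′(s)⟫ / (‖C(s)‖ · ‖C′(s)‖) is well defined for all sufficiently small s > 0 and tends to 1 as s → 0⁺. -/

import Mathlib

open Filter

/-- Key asymptotic fact of Section 3: along a nontrivial real-analytic curve through
the origin, the cosine of the angle between the position vector `C(s)` and the tangent
`C′(s)` is well defined for small `s > 0` and tends to `1` as `s → 0⁺`. -/
theorem analytic_curve_secant_tangent_angle_tendsto_one
    {E : Type*} [NormedAddCommGroup E] [InnerProductSpace ℝ E] [FiniteDimensional ℝ E]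
    (C : ℝ → E) (hC : AnalyticAt ℝ C 0) (h0 : C 0 = 0)
    (hnz : ¬ ∀ᶠ s in nhds (0 : ℝ), C s = 0) :
    (∀ᶠ s in nhdsWithin (0 : ℝ) (Set.Ioi 0), ‖C s‖ * ‖deriv C s‖ ≠ 0) ∧
      Tendsto (fun s : ℝ => (inner ℝ (C s) (deriv C s) : ℝ) / (‖C s‖ * ‖deriv C s‖))
        (nhdsWithin (0 : ℝ) (Set.Ioi 0)) (nhds 1) := by
  obtain ⟨n, g, hg_an, hg_ne, hg_eq⟩ :=
    hC.exists_eventuallyEq_pow_smul_nonzero_iff.mpr hnz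
  simp only [sub_zero] at hg_eq
  -- `n ≥ 1` since `C 0 = 0`
  obtain ⟨m, rfl⟩ : ∃ m, n = m + 1 := by
    cases n with
    | zero =>
        exfalso
        have := hg_eq.self_of_nhds
        simp only [pow_zero, one_smul, h0] at this
        exact hg_ne this.symm
    | succ m => exact ⟨m, rfl⟩
  -- the "tangent unit factor" h
  set h : ℝ → E := fun s => ((m + 1 : ℕ) : ℝ) • g s + s • deriv g s with hh
  -- continuity facts
  have hg_cont : ContinuousAt g 0 := hg_an.continuousAt
  have hdg_an : AnalyticAt ℝ (deriv g) 0 := by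
    obtain ⟨u, hu, hu_an⟩ := hg_an.exists_mem_nhds_analyticOnNhd
    have : AnalyticOnNhd ℝ (deriv g) (interior u) :=
      (hu_an.mono interior_subset).deriv
    exact this 0 (mem_interior_iff_mem_nhds.mpr hu)
  have hdg_cont : ContinuousAt (deriv g) 0 := hdg_an.continuousAt
  have hh_cont : ContinuousAt h 0 :=
    (hg_cont.const_smul _).add (continuousAt_id.smul hdg_cont)
  have hh0 : h 0 = ((m + 1 : ℕ) : ℝ) • g 0 := by simp [hh]
  have hmpos : ((m + 1 : ℕ) : ℝ) ≠ 0 := by positivity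
  have hh_ne : h 0 ≠ 0 := by
    rw [hh0]
    exact smul_ne_zero hmpos hg_ne
  -- the derivative of C near 0
  have hderiv : ∀ᶠ s in nhds (0 : ℝ), deriv C s = s ^ m • h s := by
    filter_upwards [hg_eq.eventually_nhds, hg_an.eventually_analyticAt] with s hs hgs
    have hC_eq : C =ᶠ[nhds s] fun z => z ^ (m + 1) • g z := hs
    rw [hC_eq.deriv_eq]
    have h1 : HasDerivAt (fun z : ℝ => z ^ (m + 1)) (((m + 1 : ℕ) : ℝ) * s ^ m) s := by
      simpa using hasDerivAt_pow (m + 1) s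
    have h2 : HasDerivAt g (deriv g s) s := hgs.differentiableAt.hasDerivAt
    have h3 := h1.smul h2
    have : s ^ (m + 1) • deriv g s + (((m + 1 : ℕ) : ℝ) * s ^ m) • g s = s ^ m • h s := by
      simp only [hh, smul_add, smul_smul, pow_succ]
      rw [add_comm]
      ring_nf
    rw [← this]
    exact h3.deriv
  -- eventual nonvanishing of g and h
  have hg_ev : ∀ᶠ s in nhds (0 : ℝ), g s ≠ 0 := hg_cont.eventually_ne hg_ne
  have hh_ev : ∀ᶠ s in nhds (0 : ℝ), h s ≠ 0 := hh_cont.eventually_ne hh_ne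
  -- pointwise identification of the ratio on the right
  have key : ∀ᶠ s in nhdsWithin (0 : ℝ) (Set.Ioi 0),
      (‖C s‖ * ‖deriv C s‖ ≠ 0) ∧
      (inner ℝ (C s) (deriv C s) : ℝ) / (‖C s‖ * ‖deriv C s‖)
        = (inner ℝ (g s) (h s) : ℝ) / (‖g s‖ * ‖h s‖) := by
    filter_upwards [nhdsWithin_le_nhds hg_eq, nhdsWithin_le_nhds hderiv,
      nhdsWithin_le_nhds hg_ev, nhdsWithin_le_nhds hh_ev, self_mem_nhdsWithin]
      with s hCs hCs' hgs hhs hspos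
    have hs0 : (0 : ℝ) < s := hspos
    have hpow1 : (0 : ℝ) < s ^ (m + 1) := pow_pos hs0 _
    have hpow2 : (0 : ℝ) < s ^ m := pow_pos hs0 _
    have hnorm1 : ‖C s‖ = s ^ (m + 1) * ‖g s‖ := by
      rw [hCs, norm_smul, Real.norm_eq_abs, abs_of_pos hpow1]
    have hnorm2 : ‖deriv C s‖ = s ^ m * ‖h s‖ := by
      rw [hCs', norm_smul, Real.norm_eq_abs, abs_of_pos hpow2]
    have hinner : (inner ℝ (C s) (deriv C s) : ℝ)
        = (s ^ (m + 1) * s ^ m) * inner ℝ (g s) (h s) := by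
      rw [hCs, hCs', real_inner_smul_left, real_inner_smul_right]
      ring
    have hgn : (0:ℝ) < ‖g s‖ := norm_pos_iff.mpr hgs
    have hhn : (0:ℝ) < ‖h s‖ := norm_pos_iff.mpr hhs
    constructor
    · rw [hnorm1, hnorm2]
      positivity
    · rw [hinner, hnorm1, hnorm2]
      rw [show s ^ (m + 1) * ‖g s‖ * (s ^ m * ‖h s‖)
          = (s ^ (m + 1) * s ^ m) * (‖g s‖ * ‖h s‖) by ring]
      exact mul_div_mul_left _ _ (by positivity)
  refine ⟨key.mono fun s hs => hs.1, ?_⟩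
  -- the limit of the continuous surrogate
  have hF_cont : ContinuousAt
      (fun s : ℝ => (inner ℝ (g s) (h s) : ℝ) / (‖g s‖ * ‖h s‖)) 0 := by
    apply ContinuousAt.div
    · exact hg_cont.inner hh_cont
    · exact (hg_cont.norm.mul hh_cont.norm)
    · have h1 : (0:ℝ) < ‖g 0‖ := norm_pos_iff.mpr hg_ne
      have h2 : (0:ℝ) < ‖h 0‖ := norm_pos_iff.mpr hh_ne
      positivity
  have hF0 : (inner ℝ (g 0) (h 0) : ℝ) / (‖g 0‖ * ‖h 0‖) = 1 := by
    rw [hh0, real_inner_smul_right, real_inner_self_eq_norm_mul_norm,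
      norm_smul, Real.norm_eq_abs, abs_of_pos (by positivity : (0:ℝ) < ((m+1:ℕ):ℝ))]
    have hgn : ‖g 0‖ ≠ 0 := norm_ne_zero_iff.mpr hg_ne
    field_simp
  have hF_tend : Tendsto (fun s : ℝ => (inner ℝ (g s) (h s) : ℝ) / (‖g s‖ * ‖h s‖))
      (nhdsWithin (0 : ℝ) (Set.Ioi 0)) (nhds 1) := by
    rw [← hF0]
    exact (hF_cont.tendsto).mono_left nhdsWithin_le_nhds
  exact hF_tend.congr' (key.mono fun s hs => hs.2.symm)
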